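/- With the setup of the ψ_ω automorphisms on the free product F of copies of ℤ/2 indexed by a finite poset Ω: if ω₁ < ω₂ in Ω, then ψ_{ω₁} and ψ_{ω₂} commute as automorphisms of F. -/

import Mathlib

open scoped Classical

/-- The set of relations `x_ω² = 1` defining the free product of copies of `ℤ/2`
indexed by `Ω`. -/
def sqRels (Ω : Type) : Set (FreeGroup Ω) := Set.range (fun ω : Ω => FreeGroup.of ω ^ 2)

/-- `FP Ω` is the free product of copies of `ℤ/2` indexed by `Ω`. -/
abbrev FP (Ω : Type) := PresentedGroup (sqRels Ω)

/-- The generator `x_ω` of `FP Ω`. -/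
def xg {Ω : Type} (ω : Ω) : FP Ω := PresentedGroup.of ω

/-- The endomorphism `ψ_ω` is determined by `ψ_ω(x_γ) = x_ω x_γ x_ω` if `γ < ω`
and `ψ_ω(x_γ) = x_γ` otherwise. -/
def IsPsiHom {Ω : Type} [PartialOrder Ω] (ω : Ω) (ψ : FP Ω →* FP Ω) : Prop :=
  ∀ γ : Ω, ψ (xg γ) = if γ < ω then xg ω * xg γ * xg ω else xg γ

lemma xg_sq {Ω : Type} (ω : Ω) : xg ω * xg ω = 1 := by
  have : (QuotientGroup.mk (FreeGroup.of ω ^ 2 : FreeGroup Ω) : FP Ω) = 1 := by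
    rw [QuotientGroup.eq_one_iff]
    exact Subgroup.subset_normalClosure ⟨ω, rfl⟩
  have h2 : xg ω * xg ω = (QuotientGroup.mk (FreeGroup.of ω ^ 2 : FreeGroup Ω) : FP Ω) := by
    rw [sq]; rfl
  rw [h2]; exact this

lemma xg_cancel {Ω : Type} (ω : Ω) (a : FP Ω) : xg ω * (xg ω * a) = a := by
  rw [← mul_assoc, xg_sq, one_mul]

/-- If `ω₁ < ω₂` then the endomorphisms `ψ_{ω₁}` and `ψ_{ω₂}` commute. -/
theorem psi_commute (Ω : Type) [PartialOrder Ω] [Fintype Ω] (ω₁ ω₂ : Ω) (h : ω₁ < ω₂)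
    (ψ₁ ψ₂ : FP Ω →* FP Ω) (h₁ : IsPsiHom ω₁ ψ₁) (h₂ : IsPsiHom ω₂ ψ₂) :
    ψ₁.comp ψ₂ = ψ₂.comp ψ₁ := by
  apply PresentedGroup.ext
  intro γ
  have hx : (PresentedGroup.of γ : FP Ω) = xg γ := rfl
  have h21 : ¬ ω₂ < ω₁ := fun hc => absurd (hc.trans h) (lt_irrefl _)
  simp only [IsPsiHom] at h₁ h₂
  simp only [MonoidHom.comp_apply, hx]
  by_cases hg1 : γ < ω₁
  · have hg2 : γ < ω₂ := hg1.trans h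
    simp [map_mul, h₁, h₂, hg1, hg2, h, h21, mul_assoc, xg_cancel]
  · by_cases hg2 : γ < ω₂
    · simp [map_mul, h₁, h₂, hg1, hg2, h21, mul_assoc]
    · have hg2' : ¬ γ < ω₁ := hg1
      simp [map_mul, h₁, h₂, hg1, hg2]
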